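/- The graph G15 on vertex set {1,…,15} with edges {1,2},{1,15},{2,15},{2,3},{3,4},{3,13},{4,12},{12,5},{4,14},{5,6},{5,10},{6,7},{6,11},{7,8},{7,9},{8,9},{9,10},{10,11},{11,13},{13,14},{14,15} has P3-isolation number exactly 4. -/
import Mathlib

open SimpleGraph

/-- `G` contains a copy of the 3-vertex path as a (not necessarily induced) subgraph. -/
def containsP3 {V : Type*} (G : SimpleGraph V) : Prop :=
  ∃ f : Fin 3 → V, Function.Injective f ∧
    ∀ a b, (SimpleGraph.pathGraph 3).Adj a b → G.Adj (f a) (f b)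

/-- The closed neighbourhood `N[D]` of a set of vertices `D`. -/
def closedNbhd {V : Type*} (G : SimpleGraph V) (D : Set V) : Set V :=
  {v | v ∈ D ∨ ∃ d ∈ D, G.Adj d v}

/-- `D` is a `P3`-isolating set of `G`: `G - N[D]` contains no copy of `P3`. -/
def IsP3Isolating {V : Type*} (G : SimpleGraph V) (D : Set V) : Prop :=
  ¬ containsP3 (G.induce (closedNbhd G D)ᶜ)

/-- The `P3`-isolation number `ι(G, P3)`. -/
noncomputable def iotaP3 {V : Type*} (G : SimpleGraph V) : ℕ :=
  sInf {n | ∃ D : Finset V, D.card = n ∧ IsP3Isolating G ↑D}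

/-- The graph `G₁₅` of the paper, with vertices `0,…,14` standing for `1,…,15`. -/
def G15graph : SimpleGraph (Fin 15) :=
  SimpleGraph.fromRel (fun u v => ((u.val, v.val) ∈
    [(0,1),(0,14),(1,14),(1,2),(2,3),(2,12),(3,11),(11,4),(3,13),(4,5),(4,9),
     (5,6),(5,10),(6,7),(6,8),(7,8),(8,9),(9,10),(10,12),(12,13),(13,14)] : Prop))

instance : DecidableRel G15graph.Adj := fun a b =>
  decidable_of_iff _ (SimpleGraph.fromRel_adj _ a b).symm

/-- Bitmask of the closed neighbourhood of each vertex. -/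
def cnMask : Fin 15 → ℕ := ![16387, 16391, 4110, 10252, 2608, 1136, 480, 448, 960, 1808, 5664, 2072, 13316, 28680, 24579]

/-- All paths `x - y - z` in `G15graph` together with bitmask of `{x,y,z}`. -/
def pl : List ((Fin 15 × Fin 15 × Fin 15) × ℕ) := [((1,0,14),16387),
  ((0,1,2),7),
  ((0,1,14),16387),
  ((2,1,14),16390),
  ((1,2,3),14),
  ((1,2,12),4102),
  ((3,2,12),4108),
  ((2,3,11),2060),
  ((2,3,13),8204),
  ((11,3,13),10248),
  ((5,4,9),560),
  ((5,4,11),2096),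
  ((9,4,11),2576),
  ((4,5,6),112),
  ((4,5,10),1072),
  ((6,5,10),1120),
  ((5,6,7),224),
  ((5,6,8),352),
  ((7,6,8),448),
  ((6,7,8),448),
  ((6,8,7),448),
  ((6,8,9),832),
  ((7,8,9),896),
  ((4,9,8),784),
  ((4,9,10),1552),
  ((8,9,10),1792),
  ((5,10,9),1568),
  ((5,10,12),5152),
  ((9,10,12),5632),
  ((3,11,4),2072),
  ((2,12,10),5124),
  ((2,12,13),12292),
  ((10,12,13),13312),
  ((3,13,12),12296),
  ((3,13,14),24584),
  ((12,13,14),28672),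
  ((0,14,1),16387),
  ((0,14,13),24577),
  ((1,14,13),24578)]

lemma plSpec : ∀ p ∈ pl, p.1.1 ≠ p.1.2.2 ∧ G15graph.Adj p.1.1 p.1.2.1 ∧
    G15graph.Adj p.1.2.1 p.1.2.2 ∧ Nat.testBit p.2 p.1.1.val = true ∧
    Nat.testBit p.2 p.1.2.1.val = true ∧ Nat.testBit p.2 p.1.2.2.val = true := by decide

lemma cnSpec : ∀ d v : Fin 15, (v = d ∨ G15graph.Adj d v) ↔ Nat.testBit (cnMask d) v.val = true := by decide

lemma key : ∀ a b c : Fin 15, ∃ p ∈ pl, (cnMask a ||| cnMask b ||| cnMask c) &&& p.2 = 0 := by decide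

lemma containsP3_of {V : Type*} (G : SimpleGraph V) (s : Set V) (x y z : V)
    (hx : x ∈ s) (hy : y ∈ s) (hz : z ∈ s) (hxz : x ≠ z)
    (h1 : G.Adj x y) (h2 : G.Adj y z) : containsP3 (G.induce s) := by
  refine ⟨![⟨x, hx⟩, ⟨y, hy⟩, ⟨z, hz⟩], ?_, ?_⟩
  · intro a b hab
    fin_cases a <;> fin_cases b <;> simp_all
  · intro a b hab
    rw [SimpleGraph.pathGraph_adj] at hab
    fin_cases a <;> fin_cases b <;> simp_all [SimpleGraph.comap_adj] <;>
      first | exact h1 | exact h2 | exact h1.symm | exact h2.symm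

lemma containsP3_dest {V : Type*} (G : SimpleGraph V) (s : Set V)
    (h : containsP3 (G.induce s)) :
    ∃ x y z : V, x ∈ s ∧ y ∈ s ∧ z ∈ s ∧ x ≠ z ∧ G.Adj x y ∧ G.Adj y z := by
  obtain ⟨f, hinj, hmap⟩ := h
  have a01 : (SimpleGraph.pathGraph 3).Adj 0 1 := by
    rw [SimpleGraph.pathGraph_adj]; left; rfl
  have a12 : (SimpleGraph.pathGraph 3).Adj 1 2 := by
    rw [SimpleGraph.pathGraph_adj]; left; rfl
  refine ⟨(f 0).val, (f 1).val, (f 2).val, (f 0).2, (f 1).2, (f 2).2, ?_,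
    hmap 0 1 a01, hmap 1 2 a12⟩
  intro h
  exact absurd (hinj (Subtype.ext h)) (by decide)

lemma cover (D : Finset (Fin 15)) (h : D.card ≤ 3) :
    ∃ a b c : Fin 15, ∀ x ∈ D, x = a ∨ x = b ∨ x = c := by
  interval_cases h3 : D.card
  · rw [Finset.card_eq_zero] at h3
    exact ⟨0, 0, 0, by simp [h3]⟩
  · obtain ⟨a, rfl⟩ := Finset.card_eq_one.mp h3
    exact ⟨a, a, a, by simp⟩
  · obtain ⟨a, b, _, rfl⟩ := Finset.card_eq_two.mp h3
    exact ⟨a, b, b, fun x hx => by simp at hx; tauto⟩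
  · obtain ⟨a, b, c, _, _, _, rfl⟩ := Finset.card_eq_three.mp h3
    exact ⟨a, b, c, fun x hx => by simp at hx; tauto⟩

lemma upperM : ∀ x y z : Fin 15, x ≠ z → G15graph.Adj x y → G15graph.Adj y z →
    Nat.testBit 24191 x.val = true ∨ Nat.testBit 24191 y.val = true ∨
    Nat.testBit 24191 z.val = true := by decide

lemma Mor : (24191 : ℕ) = cnMask 0 ||| cnMask 2 ||| cnMask 4 ||| cnMask 5 := by decide

/-- The graph `G₁₅` has `P3`-isolation number exactly `4`. -/
theorem stmt11 : iotaP3 G15graph = 4 := by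
  have h4 : (4 : ℕ) ∈ {n | ∃ D : Finset (Fin 15), D.card = n ∧ IsP3Isolating G15graph ↑D} := by
    refine ⟨{0, 2, 4, 5}, by decide, ?_⟩
    intro hcon
    obtain ⟨x, y, z, hx, hy, hz, hxz, h1, h2⟩ := containsP3_dest _ _ hcon
    have hmem : ∀ v : Fin 15, Nat.testBit 24191 v.val = true →
        v ∈ closedNbhd G15graph ↑({0, 2, 4, 5} : Finset (Fin 15)) := by
      intro v hv
      rw [Mor, Nat.testBit_or, Nat.testBit_or, Nat.testBit_or] at hv
      simp only [Bool.or_eq_true] at hv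
      have : ∃ d : Fin 15, d ∈ ({0, 2, 4, 5} : Finset (Fin 15)) ∧
          (v = d ∨ G15graph.Adj d v) := by
        rcases hv with ((h | h) | h) | h
        · exact ⟨0, by decide, (cnSpec 0 v).mpr h⟩
        · exact ⟨2, by decide, (cnSpec 2 v).mpr h⟩
        · exact ⟨4, by decide, (cnSpec 4 v).mpr h⟩
        · exact ⟨5, by decide, (cnSpec 5 v).mpr h⟩
      obtain ⟨d, hd, hvd⟩ := this
      rcases hvd with rfl | hadj
      · exact Or.inl (by simpa using hd)
      · exact Or.inr ⟨d, by simpa using hd, hadj⟩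
    rcases upperM x y z hxz h1 h2 with h | h | h
    · exact hx (hmem x h)
    · exact hy (hmem y h)
    · exact hz (hmem z h)
  refine le_antisymm (Nat.sInf_le h4) (le_csInf ⟨4, h4⟩ ?_)
  rintro n ⟨D, rfl, hiso⟩
  by_contra hlt
  push_neg at hlt
  obtain ⟨a, b, c, hcov⟩ := cover D (by omega)
  obtain ⟨p, hp, hmask⟩ := key a b c
  obtain ⟨hne, h1, h2, b1, b2, b3⟩ := plSpec p hp
  have havoid : ∀ v : Fin 15, Nat.testBit p.2 v.val = true →
      v ∈ (closedNbhd G15graph ↑D)ᶜ := by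
    intro v hv hmemv
    have hd : ∃ d, d ∈ D ∧ (v = d ∨ G15graph.Adj d v) := by
      rcases hmemv with h | ⟨d, hd, hadj⟩
      · exact ⟨v, by simpa using h, Or.inl rfl⟩
      · exact ⟨d, by simpa using hd, Or.inr hadj⟩
    obtain ⟨d, hd, hvd⟩ := hd
    have hbit : Nat.testBit (cnMask d) v.val = true := (cnSpec d v).mp hvd
    have hbig : Nat.testBit (cnMask a ||| cnMask b ||| cnMask c) v.val = true := by
      rw [Nat.testBit_or, Nat.testBit_or]
      rcases hcov d hd with rfl | rfl | rfl <;> simp [hbit]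
    have : Nat.testBit ((cnMask a ||| cnMask b ||| cnMask c) &&& p.2) v.val = true := by
      rw [Nat.testBit_and, hbig, hv]; rfl
    rw [hmask] at this
    simp [Nat.zero_testBit] at this
  exact hiso (containsP3_of _ _ p.1.1 p.1.2.1 p.1.2.2
    (havoid _ b1) (havoid _ b2) (havoid _ b3) hne h1 h2)
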